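/- The generating function counting (possibly empty) GDAP that stay between the lines y = -1 and y = 1 by length is 1/(x^4 - x^3 - 2x^2 + 1), with series expansion beginning 1 + 2x^2 + x^3 + 3x^4 + 4x^5 + 5x^6 + 10x^7 + 11x^8 + 21x^9 + 27x^10 + ... -/

import Mathlib

open PowerSeries

/-- A valid step sequence: each step is an up-step `1` or a down-step `-k` (`k ≥ 1`),
and no two down-steps are consecutive. -/
def GoodSteps (p : List ℤ) : Prop :=
  (∀ s ∈ p, s = 1 ∨ s ≤ -1) ∧ List.Chain' (fun a b => a = 1 ∨ b = 1) p

/-- A Dyck path with air pockets: nonempty, valid steps, ends on the x-axis,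
stays weakly above the x-axis. -/
def IsDAP (p : List ℤ) : Prop :=
  p ≠ [] ∧ GoodSteps p ∧ p.sum = 0 ∧ ∀ i, 0 ≤ (p.take i).sum

/-- A grand Dyck path with air pockets: valid steps, ends on the x-axis
(possibly going below it); the empty path is allowed. -/
def IsGDAP (p : List ℤ) : Prop := GoodSteps p ∧ p.sum = 0

/-- Number of DAP of length `n`. -/
noncomputable def dapCount (n : ℕ) : ℕ :=
  Nat.card {p : List ℤ // IsDAP p ∧ p.length = n}

/-- All points of the path have ordinate in `[-1,1]`. -/
def Bounded11 (p : List ℤ) : Prop := ∀ i, -1 ≤ (p.take i).sum ∧ (p.take i).sum ≤ 1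

/-- Number of (possibly empty) GDAP of length `n` bounded by `y = -1` and `y = 1`. -/
noncomputable def g11Count (n : ℕ) : ℕ :=
  Nat.card {p : List ℤ // IsGDAP p ∧ Bounded11 p ∧ p.length = n}

noncomputable def G11 : PowerSeries ℚ := PowerSeries.mk fun n => (g11Count n : ℚ)

/-- Automaton predicate: reading `p` from height `h`, `du = true` meaning the
previous step was a down-step (so the next step must be up). -/
def Ok (h : ℤ) (du : Bool) : List ℤ → Prop
  | [] => h = 0
  | s :: p => (s = 1 ∧ h + 1 ≤ 1 ∧ Ok (h + 1) false p) ∨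
      (s ≤ -1 ∧ du = false ∧ -1 ≤ h + s ∧ Ok (h + s) true p)

noncomputable def Fs : ℕ → ℤ → Bool → Finset (List ℤ)
  | 0, h, _ => if h = 0 then {([] : List ℤ)} else ∅
  | n + 1, h, du =>
      (if h + 1 ≤ 1 then (Fs n (h + 1) false).image (List.cons 1) else ∅) ∪
      (if du then ∅ else
        (((Finset.Icc (-2 : ℤ) (-1)).filter fun s => -1 ≤ h + s).biUnion
          fun s => (Fs n (h + s) true).image (List.cons s)))

lemma mem_Fs : ∀ (n : ℕ) (h : ℤ) (du : Bool) (p : List ℤ), -1 ≤ h → h ≤ 1 →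
    (p ∈ Fs n h du ↔ Ok h du p ∧ p.length = n) := by
  intro n
  induction n with
  | zero =>
    intro h du p _ _
    cases p with
    | nil => simp [Fs, Ok]; split <;> simp_all
    | cons s q => simp [Fs, Ok]; split <;> simp_all
  | succ n ih =>
    intro h du p h1 h2
    cases p with
    | nil =>
      simp only [Fs, Finset.mem_union]
      constructor
      · rintro (hm | hm)
        · split at hm <;> simp_all
        · split at hm <;> simp_all
      · rintro ⟨hok, hl⟩; simp at hl
    | cons s q =>
      simp only [Fs, Finset.mem_union]
      constructor
      · rintro (hm | hm)
        · split at hm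
          · next hg =>
            simp only [Finset.mem_image] at hm
            obtain ⟨q', hq', heq⟩ := hm
            cases heq
            rw [ih (h + 1) false q (by omega) hg] at hq'
            exact ⟨Or.inl ⟨rfl, hg, hq'.1⟩, by simp [hq'.2]⟩
          · simp at hm
        · split at hm
          · simp at hm
          · next hdu =>
            simp only [Finset.mem_biUnion, Finset.mem_filter, Finset.mem_Icc,
              Finset.mem_image] at hm
            obtain ⟨t, ht, q', hq', heq⟩ := hm
            obtain ⟨⟨ht1, ht2⟩, ht3⟩ := ht
            cases heq
            rw [ih (h + s) true q ht3 (by omega)] at hq'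
            exact ⟨Or.inr ⟨by omega, by simpa using hdu, ht3, hq'.1⟩, by simp [hq'.2]⟩
      · rintro ⟨hok, hl⟩
        simp only [List.length_cons, Nat.succ.injEq] at hl
        rcases hok with ⟨rfl, hg, hok⟩ | ⟨hs, hdu, hb, hok⟩
        · left
          rw [if_pos hg]
          exact Finset.mem_image.2 ⟨q, (ih (h + 1) false q (by omega) hg).2 ⟨hok, hl⟩, rfl⟩
        · right
          rw [if_neg (by simp [hdu])]
          refine Finset.mem_biUnion.2 ⟨s, Finset.mem_filter.2 ⟨Finset.mem_Icc.2 ⟨by omega, hs⟩, hb⟩, ?_⟩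
          exact Finset.mem_image.2 ⟨q, (ih (h + s) true q hb (by omega)).2 ⟨hok, hl⟩, rfl⟩

lemma ok_iff : ∀ (p : List ℤ) (h : ℤ) (du : Bool), -1 ≤ h → h ≤ 1 →
    (Ok h du p ↔ (∀ s ∈ p, s = 1 ∨ s ≤ -1) ∧ List.Chain' (fun a b => a = 1 ∨ b = 1) p ∧
      (du = true → ∀ s ∈ p.head?, s = 1) ∧ h + p.sum = 0 ∧
      ∀ i, -1 ≤ h + (p.take i).sum ∧ h + (p.take i).sum ≤ 1) := by
  intro p
  induction p with
  | nil =>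
    intro h du h1 h2
    constructor
    · intro hk
      have h0 : h = 0 := hk
      subst h0
      exact ⟨by simp, List.IsChain.nil, by simp, by simp, fun i => by simp⟩
    · rintro ⟨-, -, -, hs, -⟩
      show h = 0
      simpa using hs
  | cons s q ih =>
    intro h du h1 h2
    constructor
    · rintro (⟨rfl, hg, hok⟩ | ⟨hs, hdu, hb, hok⟩)
      · rw [ih (h + 1) false (by omega) hg] at hok
        obtain ⟨ha, hc, -, hsum, hbd⟩ := hok
        refine ⟨?_, ?_, ?_, by simp only [List.sum_cons]; omega, ?_⟩
        · intro t ht; rcases List.mem_cons.1 ht with rfl | ht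
          · exact Or.inl rfl
          · exact ha t ht
        · exact List.isChain_cons.2 ⟨fun y _ => Or.inl rfl, hc⟩
        · intro _ t ht; simp at ht; omega
        · intro i
          cases i with
          | zero => simp; omega
          | succ i => have := hbd i; simp only [List.take_succ_cons, List.sum_cons]; omega
      · rw [ih (h + s) true hb (by omega)] at hok
        obtain ⟨ha, hc, hh, hsum, hbd⟩ := hok
        refine ⟨?_, ?_, ?_, by simp only [List.sum_cons]; omega, ?_⟩
        · intro t ht; rcases List.mem_cons.1 ht with rfl | ht
          · exact Or.inr hs
          · exact ha t ht
        · exact List.isChain_cons.2 ⟨fun y hy => Or.inr ((hh rfl) y hy), hc⟩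
        · intro hcon; rw [hcon] at hdu; simp at hdu
        · intro i
          cases i with
          | zero => simp; omega
          | succ i => have := hbd i; simp only [List.take_succ_cons, List.sum_cons]; omega
    · rintro ⟨ha, hc, hh, hsum, hbd⟩
      have hbd1 := hbd 1
      simp only [List.take_succ_cons, List.take_zero, List.sum_cons, List.sum_nil,
        add_zero] at hbd1
      have hbd' : ∀ i, -1 ≤ h + s + (q.take i).sum ∧ h + s + (q.take i).sum ≤ 1 := by
        intro i
        have := hbd (i + 1)
        simp only [List.take_succ_cons, List.sum_cons] at this
        omega
      have hc' := List.isChain_cons.1 hc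
      rcases ha s (List.mem_cons_self (a := s) (l := q)) with rfl | hs
      · left
        refine ⟨rfl, by omega, ?_⟩
        rw [ih (h + 1) false (by omega) (by omega)]
        refine ⟨fun t ht => ha t (List.mem_cons_of_mem _ ht), hc'.2, ?_, by
          simp only [List.sum_cons] at hsum; omega, hbd'⟩
        intro hcon; simp at hcon
      · right
        have hdu : du = false := by
          cases du
          · rfl
          · have := hh rfl s (by simp)
            omega
        refine ⟨hs, hdu, by omega, ?_⟩
        rw [ih (h + s) true (by omega) (by omega)]
        refine ⟨fun t ht => ha t (List.mem_cons_of_mem _ ht), hc'.2, ?_, by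
          simp only [List.sum_cons] at hsum; omega, hbd'⟩
        intro _ t ht
        rcases hc'.1 t ht with h1 | h1
        · omega
        · exact h1

lemma ok_zero_iff (p : List ℤ) : Ok 0 false p ↔ IsGDAP p ∧ Bounded11 p := by
  rw [ok_iff p 0 false (by norm_num) (by norm_num)]
  constructor
  · rintro ⟨h1, h2, -, h4, h5⟩
    exact ⟨⟨⟨h1, h2⟩, by simpa using h4⟩, fun i => by have := h5 i; simpa using this⟩
  · rintro ⟨⟨⟨h1, h2⟩, h4⟩, h5⟩
    exact ⟨h1, h2, by simp, by simpa using h4, fun i => by have := h5 i; simpa using this⟩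

lemma g11Count_eq (n : ℕ) : g11Count n = (Fs n 0 false).card := by
  rw [g11Count, ← Nat.card_eq_finsetCard]
  apply Nat.card_congr
  apply Equiv.subtypeEquivRight
  intro p
  rw [mem_Fs n 0 false p (by norm_num) (by norm_num), ok_zero_iff]
  tauto



lemma card_union_cons (a b : ℤ) (s t : Finset (List ℤ)) (hab : a ≠ b) :
    ((s.image (a :: ·)) ∪ (t.image (b :: ·))).card = s.card + t.card := by
  rw [Finset.card_union_of_disjoint, Finset.card_image_of_injective _ (List.cons_injective),
    Finset.card_image_of_injective _ (List.cons_injective)]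
  rw [Finset.disjoint_left]
  rintro x hx hy
  simp only [Finset.mem_image] at hx hy
  obtain ⟨p, -, rfl⟩ := hx
  obtain ⟨q, -, he⟩ := hy
  exact hab ((List.cons.inj he).1.symm)

lemma filter0 : ((Finset.Icc (-2 : ℤ) (-1)).filter fun s => -1 ≤ (0 : ℤ) + s) = {-1} := by
  ext x
  simp only [Finset.mem_filter, Finset.mem_Icc, Finset.mem_singleton]
  omega

lemma filter1 : ((Finset.Icc (-2 : ℤ) (-1)).filter fun s => -1 ≤ (1 : ℤ) + s) =
    {(-2 : ℤ), -1} := by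
  ext x
  simp only [Finset.mem_filter, Finset.mem_Icc, Finset.mem_singleton, Finset.mem_insert]
  omega

lemma Fs_step_00 (n : ℕ) :
    (Fs (n + 1) 0 false).card = (Fs n 1 false).card + (Fs n (-1) true).card := by
  have he : Fs (n + 1) 0 false =
      (Fs n 1 false).image (1 :: ·) ∪ (Fs n (-1) true).image ((-1) :: ·) := by
    simp only [Fs]
    rw [if_pos (by norm_num), if_neg (by simp), filter0, Finset.singleton_biUnion]
    norm_num
  rw [he, card_union_cons 1 (-1) _ _ (by norm_num)]

lemma Fs_step_1f (n : ℕ) :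
    (Fs (n + 1) 1 false).card = (Fs n (-1) true).card + (Fs n 0 true).card := by
  have he : Fs (n + 1) 1 false =
      (Fs n (-1) true).image ((-2) :: ·) ∪ (Fs n 0 true).image ((-1) :: ·) := by
    simp only [Fs]
    rw [if_neg (by norm_num), if_neg (by simp), filter1, Finset.biUnion_insert,
      Finset.singleton_biUnion, Finset.empty_union]
    norm_num
  rw [he, card_union_cons (-2) (-1) _ _ (by norm_num)]

lemma Fs_step_m1t (n : ℕ) : (Fs (n + 1) (-1) true).card = (Fs n 0 false).card := by
  have he : Fs (n + 1) (-1) true = (Fs n 0 false).image (1 :: ·) := by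
    simp only [Fs]
    rw [if_pos (by norm_num), if_pos (by simp), Finset.union_empty]
    norm_num
  rw [he, Finset.card_image_of_injective _ List.cons_injective]

lemma Fs_step_0t (n : ℕ) : (Fs (n + 1) 0 true).card = (Fs n 1 false).card := by
  have he : Fs (n + 1) 0 true = (Fs n 1 false).image (1 :: ·) := by
    simp only [Fs]
    rw [if_pos (by norm_num), if_pos (by simp), Finset.union_empty]
    norm_num
  rw [he, Finset.card_image_of_injective _ List.cons_injective]

/-- The linear model: components are the counts from states
`(0,false)`, `(1,false)`, `(-1,true)`, `(0,true)`. -/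
def mQ : ℕ → ℕ × ℕ × ℕ × ℕ
  | 0 => (1, 0, 0, 1)
  | n + 1 =>
    ((mQ n).2.1 + (mQ n).2.2.1, (mQ n).2.2.1 + (mQ n).2.2.2, (mQ n).1, (mQ n).2.1)

lemma mQ_succ (n : ℕ) : mQ (n + 1) =
    ((mQ n).2.1 + (mQ n).2.2.1, (mQ n).2.2.1 + (mQ n).2.2.2, (mQ n).1, (mQ n).2.1) := rfl

lemma Fs_eq_mQ (n : ℕ) :
    (Fs n 0 false).card = (mQ n).1 ∧ (Fs n 1 false).card = (mQ n).2.1 ∧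
    (Fs n (-1) true).card = (mQ n).2.2.1 ∧ (Fs n 0 true).card = (mQ n).2.2.2 := by
  induction n with
  | zero =>
    refine ⟨?_, ?_, ?_, ?_⟩ <;> simp [Fs, mQ]
  | succ n ih =>
    obtain ⟨h1, h2, h3, h4⟩ := ih
    rw [mQ_succ]
    exact ⟨by rw [Fs_step_00, h2, h3], by rw [Fs_step_1f, h3, h4],
      by rw [Fs_step_m1t, h1], by rw [Fs_step_0t, h2]⟩

lemma g11Count_eq_mQ (n : ℕ) : g11Count n = (mQ n).1 := by
  rw [g11Count_eq]; exact (Fs_eq_mQ n).1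

lemma g11_rec (n : ℕ) :
    g11Count (n + 4) + g11Count n = 2 * g11Count (n + 2) + g11Count (n + 1) := by
  simp only [g11Count_eq_mQ]
  simp only [show n + 4 = n + 3 + 1 from rfl, show n + 3 = n + 2 + 1 from rfl,
    show n + 2 = n + 1 + 1 from rfl, mQ_succ]
  omega

/-- the o.g.f. of GDAP bounded by `y = -1` and `y = 1` is
`1/(x⁴-x³-2x²+1)`, with series beginning
`1 + 2x² + x³ + 3x⁴ + 4x⁵ + 5x⁶ + 10x⁷ + 11x⁸ + 21x⁹ + 27x¹⁰ + ⋯`. -/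
theorem stmt15 :
    G11 * (X ^ 4 - X ^ 3 - 2 * X ^ 2 + 1) = 1 ∧
    g11Count 0 = 1 ∧ g11Count 1 = 0 ∧ g11Count 2 = 2 ∧ g11Count 3 = 1 ∧
    g11Count 4 = 3 ∧ g11Count 5 = 4 ∧ g11Count 6 = 5 ∧ g11Count 7 = 10 ∧
    g11Count 8 = 11 ∧ g11Count 9 = 21 ∧ g11Count 10 = 27 := by
  have hv : ∀ k, g11Count k = (mQ k).1 := g11Count_eq_mQ
  refine ⟨?_, by rw [hv]; decide, by rw [hv]; decide, by rw [hv]; decide, by rw [hv]; decide,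
    by rw [hv]; decide, by rw [hv]; decide, by rw [hv]; decide, by rw [hv]; decide,
    by rw [hv]; decide, by rw [hv]; decide, by rw [hv]; decide⟩
  have h0 : g11Count 0 = 1 := by rw [hv]; decide
  have h1 : g11Count 1 = 0 := by rw [hv]; decide
  have h2 : g11Count 2 = 2 := by rw [hv]; decide
  have h3 : g11Count 3 = 1 := by rw [hv]; decide
  have hre : G11 * (X ^ 4 - X ^ 3 - 2 * X ^ 2 + 1) =
      G11 * X ^ 4 - G11 * X ^ 3 - (G11 * X ^ 2 + G11 * X ^ 2) + G11 := by ring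
  rw [hre]
  ext n
  have hc : ∀ m, (PowerSeries.coeff m) G11 = (g11Count m : ℚ) := fun m =>
    PowerSeries.coeff_mk m _
  simp only [map_add, map_sub, PowerSeries.coeff_mul_X_pow', hc, PowerSeries.coeff_one]
  match n with
  | 0 =>
    rw [if_neg (by omega), if_neg (by omega), if_neg (by omega), if_pos rfl]
    rw [h0]; norm_num
  | 1 =>
    rw [if_neg (by omega), if_neg (by omega), if_neg (by omega), if_neg (by omega)]
    rw [h1]; norm_num
  | 2 =>
    rw [if_neg (by omega), if_neg (by omega), if_pos (by omega), if_neg (by omega)]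
    norm_num [h0, h2]
  | 3 =>
    rw [if_neg (by omega), if_pos (by omega), if_pos (by omega), if_neg (by omega)]
    norm_num [h0, h1, h3]
  | (n + 4 : ℕ) =>
    rw [if_pos (by omega), if_pos (by omega), if_pos (by omega), if_neg (by omega)]
    have hr : (g11Count (n + 4) : ℚ) + g11Count n =
        2 * g11Count (n + 2) + g11Count (n + 1) := by exact_mod_cast g11_rec n
    have e4 : n + 4 - 4 = n := by omega
    have e3 : n + 4 - 3 = n + 1 := by omega
    have e2 : n + 4 - 2 = n + 2 := by omega
    rw [e4, e3, e2]
    linarith
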